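/- For probability vectors p_T and p_S with positive entries and target class t, the non-target distillation loss L_NTD = ∑_{u≠t} p_T(u)·log(p_T(u)/p_S(u)) can be rewritten as (1 - p_T(t))·∑_{u≠t} q_T(u)·log(q_T(u)/q_S(u)) + (1 - p_T(t))·log((1 - p_T(t))/(1 - p_S(t))), where q(u) = p(u)/(1 - p(t)) are the renormalized non-target distributions, assuming p_T(t) < 1 and p_S(t) < 1. -/

import Mathlib

theorem stmt_16 (C : ℕ) (hC : 2 ≤ C) (t : Fin C) (pT pS : Fin C → ℝ)
    (hT : ∀ u, 0 < pT u) (hS : ∀ u, 0 < pS u)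
    (hsumT : ∑ u, pT u = 1) (hsumS : ∑ u, pS u = 1)
    (hTt : pT t < 1) (hSt : pS t < 1)
    (qT qS : Fin C → ℝ)
    (hqT : ∀ u, qT u = pT u / (1 - pT t)) (hqS : ∀ u, qS u = pS u / (1 - pS t)) :
    ∑ u ∈ Finset.univ.erase t, pT u * Real.log (pT u / pS u) =
      (1 - pT t) * ∑ u ∈ Finset.univ.erase t, qT u * Real.log (qT u / qS u) +
        (1 - pT t) * Real.log ((1 - pT t) / (1 - pS t)) := by
  have hT1 : (0:ℝ) < 1 - pT t := by linarith
  have hS1 : (0:ℝ) < 1 - pS t := by linarith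
  have hsum : ∑ u ∈ Finset.univ.erase t, pT u = 1 - pT t := by
    have := Finset.add_sum_erase Finset.univ pT (Finset.mem_univ t)
    rw [hsumT] at this
    linarith
  have key : ∀ u ∈ Finset.univ.erase t,
      pT u * Real.log (pT u / pS u) =
        (1 - pT t) * (qT u * Real.log (qT u / qS u))
          + pT u * Real.log ((1 - pT t) / (1 - pS t)) := by
    intro u _
    have hq : qT u / qS u = (pT u / pS u) / ((1 - pT t) / (1 - pS t)) := by
      rw [hqT, hqS]
      field_simp
    have hlog : Real.log (qT u / qS u) =
        Real.log (pT u / pS u) - Real.log ((1 - pT t) / (1 - pS t)) := by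
      rw [hq, Real.log_div (div_pos (hT u) (hS u)).ne' (div_pos hT1 hS1).ne']
    have hpq : (1 - pT t) * qT u = pT u := by
      rw [hqT]; field_simp
    rw [hlog, show (1 - pT t) * (qT u * (Real.log (pT u / pS u) -
      Real.log ((1 - pT t) / (1 - pS t)))) = ((1 - pT t) * qT u) *
      (Real.log (pT u / pS u) - Real.log ((1 - pT t) / (1 - pS t))) by ring, hpq]
    ring
  rw [Finset.sum_congr rfl key, Finset.sum_add_distrib, ← Finset.mul_sum,
    ← Finset.sum_mul, hsum]
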